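/- Let τ_A ∈ V be the profile assigning to each tree t the set τ_A(t) = {q ∈ Q | there exists an accepting run ρ of A on t with ρ(ε) = q}. Then τ_A = μx₁.νx₂.μx₃.νx₄.⋯.μx_{d−1}.νx_d.δ(x₁,…,x_d), i.e., τ_A equals the alternating nested fixed point of δ where odd-indexed variables are bound by least fixed points and even-indexed variables by greatest fixed points. -/

import Mathlib

/-- An infinite binary tree over the alphabet `A`: a labelling of `{L,R}*`
(directions encoded as `Bool`, `L = false`, `R = true`). -/
abbrev BTree (A : Type*) := List Bool → A

/-- The subtree of `t` rooted at the node `v`. -/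
def BTree.subtree {A : Type*} (t : BTree A) (v : List Bool) : BTree A := fun w => t (v ++ w)

/-- The function `δ : V^d → V` induced by the automaton with transition relation `γ`
and priority map `Ω` (a state of 1-based priority `i` is mapped by `Ω` to `i − 1 : Fin d`):
`q ∈ δ(τ₁,…,τ_d)(t)` iff there is a transition `(q, t(ε), qL, qR) ∈ γ` with
`qL ∈ τ_{Ω(q)}(t.L)` and `qR ∈ τ_{Ω(q)}(t.R)`. -/
def deltaAut {A Q : Type*} {d : ℕ} (γ : Set (Q × A × Q × Q)) (Ω : Q → Fin d)
    (τ : Fin d → BTree A → Set Q) : BTree A → Set Q := fun t =>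
  {q | ∃ qL qR : Q, (q, t [], qL, qR) ∈ γ ∧
    qL ∈ τ (Ω q) (t.subtree [false]) ∧ qR ∈ τ (Ω q) (t.subtree [true])}

/-- `δ` is chain-continuous: it commutes with suprema and infima of nonempty chains. -/
def ChainContinuous {V : Type*} [CompleteLattice V] {d : ℕ} (δ : (Fin d → V) → V) : Prop :=
  ∀ C : Set (Fin d → V), C.Nonempty → IsChain (· ≤ ·) C →
    δ (sSup C) = sSup (δ '' C) ∧ δ (sInf C) = sInf (δ '' C)

/-- `μx.f(x)`, the least fixed point of a monotone `f` (Knaster–Tarski). -/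
noncomputable def lfpOf {V : Type*} [CompleteLattice V] (f : V → V) : V :=
  sInf {x | f x ≤ x}

/-- `νx.f(x)`, the greatest fixed point of a monotone `f` (Knaster–Tarski). -/
noncomputable def gfpOf {V : Type*} [CompleteLattice V] (f : V → V) : V :=
  sSup {x | x ≤ f x}

/-- `NestedAux δ k σ = ψ_{d+1−k}(σ)`, where `ψ_{d+1} = δ` and
`ψ_n(x₁,…,x_{n−1}) = μ/ν y_n. ψ_{n+1}(x₁,…,x_{n−1},y_n)` (μ for odd `n`, ν for even `n`).
The partial assignment `σ` gives the value of `x_{j+1}` as `σ j`. -/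
noncomputable def NestedAux {V : Type*} [CompleteLattice V] {d : ℕ}
    (δ : (Fin d → V) → V) : ℕ → (ℕ → V) → V
  | 0, σ => δ (fun i => σ i.val)
  | (k + 1), σ =>
      if Odd (d - k) then
        lfpOf (fun y => NestedAux δ k (fun j => if j = d - k - 1 then y else σ j))
      else
        gfpOf (fun y => NestedAux δ k (fun j => if j = d - k - 1 then y else σ j))

/-- The alternating nested fixed point
`μx₁.νx₂.μx₃.νx₄.⋯.μx_{d−1}.νx_d.δ(x₁,…,x_d)`. -/
noncomputable def Nested {V : Type*} [CompleteLattice V] {d : ℕ}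
    (δ : (Fin d → V) → V) : V :=
  NestedAux δ d (fun _ => ⊥)

/-- A run of the automaton with transitions `γ` on the tree `t`. -/
def IsRun {A Q : Type*} (γ : Set (Q × A × Q × Q)) (t : BTree A)
    (ρ : List Bool → Q) : Prop :=
  ∀ v : List Bool, (ρ v, t v, ρ (v ++ [false]), ρ (v ++ [true])) ∈ γ

/-- A run is accepting if on every infinite branch `w` the least 1-based priority
occurring infinitely often, i.e. `liminf_{n→∞} Ω(ρ(w↾n))`, is even. -/
def IsAccepting {Q : Type*} {d : ℕ} (Ω : Q → Fin d) (ρ : List Bool → Q) : Prop :=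
  ∀ w : ℕ → Bool,
    Even (Filter.liminf (fun n => (Ω (ρ ((List.range n).map w))).val + 1) Filter.atTop)

/-- The profile `τ_A` assigning to a tree `t` the set of states `q` from which
there is an accepting run of the automaton on `t`. -/
def tauAut {A Q : Type*} {d : ℕ} (γ : Set (Q × A × Q × Q)) (Ω : Q → Fin d) :
    BTree A → Set Q := fun t =>
  {q | ∃ ρ : List Bool → Q, IsRun γ t ρ ∧ IsAccepting Ω ρ ∧ ρ [] = q}

/-! ### Auxiliary development -/

namespace PF
open Filter List

variable {A Q : Type*} {d : ℕ}

/-- The prefix of length `n` of the branch `w`. -/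
def pref (w : ℕ → Bool) (n : ℕ) : List Bool := (List.range n).map w

theorem pref_succ (w : ℕ → Bool) (n : ℕ) : pref w (n+1) = pref w n ++ [w n] := by
  simp [pref, List.range_succ]

@[simp] theorem pref_length (w : ℕ → Bool) (n : ℕ) : (pref w n).length = n := by simp [pref]

/-- A node `v` is `m`-live if all its strict ancestors have priority `≥ m`. -/
def LiveP (Ω : Q → Fin d) (m : ℕ) (ρ : List Bool → Q) (v : List Bool) : Prop :=
  ∀ n < v.length, m ≤ (Ω (ρ (v.take n))).val


@[simp] theorem pref_zero (w : ℕ → Bool) : pref w 0 = [] := rfl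

/-- Extension of a finite node `u` by an infinite branch `w'`. -/
def wExt (u : List Bool) (w' : ℕ → Bool) : ℕ → Bool := fun n => u.getD n (w' (n - u.length))

theorem pref_wExt_le (u : List Bool) (w' : ℕ → Bool) {n : ℕ} (hn : n ≤ u.length) :
    pref (wExt u w') n = u.take n := by
  induction n with
  | zero => simp
  | succ n ih =>
    have hlt : n < u.length := hn
    rw [pref_succ, ih (by omega)]
    rw [show wExt u w' n = u[n] from List.getD_eq_getElem u _ hlt]
    rw [List.take_succ, List.getElem?_eq_getElem hlt]
    rfl

theorem pref_wExt_add (u : List Bool) (w' : ℕ → Bool) (j : ℕ) :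
    pref (wExt u w') (u.length + j) = u ++ pref w' j := by
  induction j with
  | zero => rw [Nat.add_zero, pref_wExt_le u w' le_rfl, List.take_length]; simp
  | succ j ih =>
    rw [show u.length + (j+1) = (u.length + j) + 1 by omega, pref_succ, ih]
    have hw : wExt u w' (u.length + j) = w' j := by
      rw [wExt, List.getD_eq_default _ _ (by omega), Nat.add_sub_cancel_left]
    rw [hw, pref_succ, List.append_assoc]

theorem exists_branch_of_chain (f : ℕ → List Bool) (hp : ∀ n, f n <+: f (n+1))
    (hl : ∀ n, (f n).length < (f (n+1)).length) :
    ∃ w : ℕ → Bool, ∀ m, pref w ((f m).length) = f m := by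
  have hmono : ∀ a b, a ≤ b → f a <+: f b := by
    intro a b hab
    induction b, hab using Nat.le_induction with
    | base => exact List.prefix_rfl
    | succ b _ ih => exact ih.trans (hp b)
  have hgrow : ∀ j, j < (f (j+1)).length := by
    intro j
    induction j with
    | zero => have := hl 0; omega
    | succ j ih => have := hl (j+1); omega
  refine ⟨fun j => (f (j+1)).getD j false, ?_⟩
  have key : ∀ n m, n ≤ (f m).length → pref (fun j => (f (j+1)).getD j false) n = (f m).take n := by
    intro n
    induction n with
    | zero => simp
    | succ n ih =>
      intro m hm
      have hnm : n < (f m).length := hm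
      rw [pref_succ, ih m (by omega), List.take_succ, List.getElem?_eq_getElem hnm]
      have hget : (f (n+1)).getD n false = (f m)[n] := by
        rw [List.getD_eq_getElem _ _ (hgrow n)]
        rcases le_total (n+1) m with h | h
        · exact (hmono _ _ h).getElem (hgrow n)
        · exact ((hmono _ _ h).getElem hnm).symm
      rw [hget]; rfl
  intro m
  rw [key ((f m).length) m le_rfl, List.take_length]

theorem subtree_subtree (t : BTree A) (u v : List Bool) :
    (t.subtree u).subtree v = t.subtree (u ++ v) := by
  funext w; simp [BTree.subtree, List.append_assoc]

theorem liminf_shift (a : ℕ → ℕ) (k : ℕ) :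
    Filter.liminf (fun n => a (k + n)) Filter.atTop = Filter.liminf a Filter.atTop := by
  rw [show (fun n => a (k + n)) = (fun n => a (n + k)) from funext fun n => by rw [Nat.add_comm]]
  exact Filter.liminf_nat_add a k

theorem liminf_eq_of {a : ℕ → ℕ} {c : ℕ} (h1 : ∀ n, c ≤ a n)
    (h2 : ∀ N, ∃ n, N ≤ n ∧ a n = c) : Filter.liminf a Filter.atTop = c := by
  rw [Filter.liminf_eq]
  have hub : ∀ b ∈ {x | ∀ᶠ n in Filter.atTop, x ≤ a n}, b ≤ c := by
    intro b hb
    obtain ⟨N, hN⟩ := Filter.eventually_atTop.1 hb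
    obtain ⟨n, hn, he⟩ := h2 N
    exact he ▸ hN n hn
  have hc : c ∈ {x | ∀ᶠ n in Filter.atTop, x ≤ a n} := Filter.Eventually.of_forall h1
  exact le_antisymm (csSup_le ⟨c, hc⟩ hub) (le_csSup ⟨c, hub⟩ hc)


theorem pref_take (w : ℕ → Bool) {n k : ℕ} (h : n ≤ k) : (pref w k).take n = pref w n := by
  rw [pref, pref, ← List.map_take, List.take_range, Nat.min_eq_left h]

theorem pref_split (w : ℕ → Bool) (k j : ℕ) :
    pref w (k + j) = pref w k ++ pref (fun m => w (k + m)) j := by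
  induction j with
  | zero => simp
  | succ j ih =>
    rw [show k + (j+1) = (k+j)+1 by omega, pref_succ, ih, pref_succ, List.append_assoc]

theorem prefix_snoc {u v : List Bool} {b : Bool} (h : u <+: v ++ [b]) :
    u <+: v ∨ u = v ++ [b] := by
  rcases Nat.lt_or_ge u.length (v ++ [b]).length with h' | h'
  · left
    have h2 := List.prefix_iff_eq_take.1 h
    rw [List.length_append, List.length_singleton] at h'
    rw [List.take_append_of_le_length (by omega)] at h2
    rw [h2]
    exact List.take_prefix _ _
  · right
    exact h.eq_of_length (le_antisymm h.length_le h')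

theorem subtree_nil (t : BTree A) : t.subtree [] = t := rfl

theorem wf_of_no_descending {α : Type*} {r : α → α → Prop}
    (h : ∀ f : ℕ → α, ¬ ∀ n, r (f (n+1)) (f n)) : WellFounded r := by
  classical
  constructor
  intro a
  by_contra ha
  have step : ∀ x : {a // ¬Acc r a}, ∃ y : {a // ¬Acc r a}, r y.1 x.1 := by
    rintro ⟨x, hx⟩
    obtain ⟨w, hw1, hw2⟩ := exists_not_acc_lt_of_not_acc hx
    exact ⟨⟨w, hw1⟩, hw2⟩
  choose f hf using step
  refine h (fun n => (f^[n] ⟨a, ha⟩).1) (fun n => ?_)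
  show r (f^[n+1] ⟨a, ha⟩).1 (f^[n] ⟨a, ha⟩).1
  rw [Function.iterate_succ']
  exact hf _

theorem LiveP_nil {Ω : Q → Fin d} {m : ℕ} {ρ : List Bool → Q} : LiveP Ω m ρ [] := by
  intro n hn; simp at hn

theorem LiveP.mono {Ω : Q → Fin d} {m m' : ℕ} {ρ : List Bool → Q} {v : List Bool}
    (h : LiveP Ω m ρ v) (hm : m' ≤ m) : LiveP Ω m' ρ v :=
  fun n hn => le_trans hm (h n hn)

theorem LiveP.prefix {Ω : Q → Fin d} {m : ℕ} {ρ : List Bool → Q} {v u : List Bool}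
    (h : LiveP Ω m ρ v) (hu : u <+: v) : LiveP Ω m ρ u := by
  obtain ⟨s, rfl⟩ := hu
  intro n hn
  have := h n (by rw [List.length_append]; omega)
  rwa [List.take_append_of_le_length hn.le] at this

theorem LiveP_snoc {Ω : Q → Fin d} {m : ℕ} {ρ : List Bool → Q} {v : List Bool} {b : Bool} :
    LiveP Ω m ρ (v ++ [b]) ↔ LiveP Ω m ρ v ∧ m ≤ (Ω (ρ v)).val := by
  constructor
  · intro h
    refine ⟨h.prefix ⟨[b], rfl⟩, ?_⟩
    have := h v.length (by simp)
    rwa [List.take_append_of_le_length le_rfl, List.take_length] at this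
  · rintro ⟨h1, h2⟩ n hn
    simp only [List.length_append, List.length_singleton] at hn
    rcases Nat.lt_or_ge n v.length with h' | h'
    · rw [List.take_append_of_le_length h'.le]; exact h1 n h'
    · have : n = v.length := by omega
      subst this
      rwa [List.take_append_of_le_length le_rfl, List.take_length]

theorem LiveP.append {Ω : Q → Fin d} {m : ℕ} {ρ : List Bool → Q} {u y : List Bool}
    (hu : LiveP Ω m ρ u) (hy : LiveP Ω m (fun x => ρ (u ++ x)) y) : LiveP Ω m ρ (u ++ y) := by
  intro n hn
  rw [List.length_append] at hn
  rcases Nat.lt_or_ge n u.length with h' | h'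
  · rw [List.take_append_of_le_length h'.le]; exact hu n h'
  · rw [List.take_append, List.take_of_length_le h']
    exact hy (n - u.length) (by omega)

theorem LiveP.drop {Ω : Q → Fin d} {m : ℕ} {ρ : List Bool → Q} {u y : List Bool}
    (h : LiveP Ω m ρ (u ++ y)) : LiveP Ω m (fun x => ρ (u ++ x)) y := by
  intro n hn
  have := h (u.length + n) (by rw [List.length_append]; omega)
  rwa [List.take_append, List.take_of_length_le (by omega),
    Nat.add_sub_cancel_left] at this

/-- Partial run with environment `σ` and exits at priorities `< m`. -/
def PRun (γ : Set (Q × A × Q × Q)) (Ω : Q → Fin d) (m : ℕ)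
    (σ : ℕ → BTree A → Set Q) (t : BTree A) (ρ : List Bool → Q) (q : Q) : Prop :=
  ρ [] = q ∧
  (∀ v, LiveP Ω m ρ v → (ρ v, t v, ρ (v ++ [false]), ρ (v ++ [true])) ∈ γ) ∧
  (∀ v, LiveP Ω m ρ v → (Ω (ρ v)).val < m →
     ∀ b, ρ (v ++ [b]) ∈ σ (Ω (ρ v)).val (t.subtree (v ++ [b]))) ∧
  (∀ w : ℕ → Bool, (∀ n, m ≤ (Ω (ρ (pref w n))).val) →
     Even (Filter.liminf (fun n => (Ω (ρ (pref w n))).val + 1) Filter.atTop))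

def PR (γ : Set (Q × A × Q × Q)) (Ω : Q → Fin d) (m : ℕ)
    (σ : ℕ → BTree A → Set Q) : BTree A → Set Q :=
  fun t => {q | ∃ ρ, PRun γ Ω m σ t ρ q}

section CL
variable {V : Type*} [CompleteLattice V] {f : V → V}

theorem lfpOf_le {x : V} (h : f x ≤ x) : lfpOf f ≤ x := sInf_le h

theorem lfpOf_prefix (hf : Monotone f) : f (lfpOf f) ≤ lfpOf f :=
  le_sInf fun x hx => le_trans (hf (sInf_le hx)) hx

theorem le_gfpOf {x : V} (h : x ≤ f x) : x ≤ gfpOf f := le_sSup h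

theorem gfpOf_postfix (hf : Monotone f) : gfpOf f ≤ f (gfpOf f) :=
  sSup_le fun x hx => le_trans hx (hf (le_sSup hx))

end CL


theorem take_snoc {α : Type*} {l : List α} {n : ℕ} (h : n < l.length) :
    l.take (n+1) = l.take n ++ [l[n]] := by
  rw [List.take_succ, List.getElem?_eq_getElem h]
  rfl

/-- Exit children: children of live nodes of priority `i`. -/
def ECross (Ω : Q → Fin d) (i : ℕ) (ρ : List Bool → Q) (u : List Bool) : Prop :=
  ∃ w b, u = w ++ [b] ∧ LiveP Ω (i+1) ρ w ∧ (Ω (ρ w)).val = i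

theorem ECross_unique_aux {Ω : Q → Fin d} {i : ℕ} {ρ : List Bool → Q} {u₁ u₂ : List Bool}
    (h₁ : ECross Ω i ρ u₁) (h₂ : ECross Ω i ρ u₂) (hp : u₁ <+: u₂) : u₁ = u₂ := by
  obtain ⟨w₁, b₁, e₁, l₁, pr₁⟩ := h₁
  obtain ⟨w₂, b₂, e₂, l₂, pr₂⟩ := h₂
  subst e₂
  rcases prefix_snoc hp with h | h
  · exfalso
    have hw1 : w₁ <+: w₂ := by
      have : w₁ <+: u₁ := ⟨[b₁], e₁.symm⟩
      exact this.trans h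
    have hlt : w₁.length < w₂.length := by
      have h1 : u₁.length ≤ w₂.length := h.length_le
      rw [e₁, List.length_append, List.length_singleton] at h1
      omega
    have := l₂ w₁.length hlt
    rw [← List.prefix_iff_eq_take.1 hw1] at this
    omega
  · exact h

theorem ECross_unique {Ω : Q → Fin d} {i : ℕ} {ρ : List Bool → Q} {v u₁ u₂ : List Bool}
    (h₁ : ECross Ω i ρ u₁) (h₂ : ECross Ω i ρ u₂) (p₁ : u₁ <+: v) (p₂ : u₂ <+: v) :
    u₁ = u₂ := by
  rcases List.prefix_or_prefix_of_prefix p₁ p₂ with h | h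
  · exact ECross_unique_aux h₁ h₂ h
  · exact (ECross_unique_aux h₂ h₁ h).symm

variable (γ : Set (Q × A × Q × Q)) (Ω : Q → Fin d)

theorem PR_mono (m : ℕ) {σ σ' : ℕ → BTree A → Set Q} (h : ∀ j, σ j ≤ σ' j) :
    PR γ Ω m σ ≤ PR γ Ω m σ' := by
  intro t q ⟨ρ, h1, h2, h3, h4⟩
  exact ⟨ρ, h1, h2, fun v hv hlt b => h _ _ (h3 v hv hlt b), h4⟩

theorem F_mono (i : ℕ) (σ : ℕ → BTree A → Set Q) :
    Monotone (fun y => PR γ Ω (i+1) (Function.update σ i y)) := by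
  intro y y' hy
  apply PR_mono
  intro j
  rcases eq_or_ne j i with rfl | hne
  · simpa using hy
  · simp [Function.update_apply, hne]

theorem restrict {m : ℕ} {σ : ℕ → BTree A → Set Q} {t : BTree A} {ρ : List Bool → Q} {q : Q}
    (h : PRun γ Ω m σ t ρ q) {u : List Bool} (hu : LiveP Ω m ρ u) :
    PRun γ Ω m σ (t.subtree u) (fun x => ρ (u ++ x)) (ρ u) := by
  obtain ⟨hroot, htr, hex, hbr⟩ := h
  refine ⟨by simp, ?_, ?_, ?_⟩
  · intro x hx
    have := htr (u ++ x) (hu.append hx)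
    simpa [BTree.subtree, List.append_assoc] using this
  · intro x hx hlt b
    rw [subtree_subtree]
    have := hex (u ++ x) (hu.append hx) hlt b
    simpa [List.append_assoc] using this
  · intro w' hw'
    have hfull : ∀ n, m ≤ (Ω (ρ (pref (wExt u w') n))).val := by
      intro n
      rcases Nat.lt_or_ge n u.length with h' | h'
      · rw [pref_wExt_le u w' h'.le]
        exact hu n h'
      · have : n = u.length + (n - u.length) := by omega
        rw [this, pref_wExt_add]
        exact hw' (n - u.length)
    have hmain := hbr (wExt u w') hfull
    show Even (Filter.liminf (fun j => (Ω (ρ (u ++ pref w' j))).val + 1) Filter.atTop)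
    have heq : (fun j => (Ω (ρ (u ++ pref w' j))).val + 1)
        = fun j => (fun n => (Ω (ρ (pref (wExt u w') n))).val + 1) (u.length + j) := by
      funext j
      show _ = (Ω (ρ (pref (wExt u w') (u.length + j)))).val + 1
      rw [pref_wExt_add]
    rw [heq, liminf_shift (fun n => (Ω (ρ (pref (wExt u w') n))).val + 1) u.length]
    exact hmain

theorem truncate {i : ℕ} {σ : ℕ → BTree A → Set Q} {t : BTree A} {ρ : List Bool → Q} {q : Q}
    {Y : BTree A → Set Q}
    (h : PRun γ Ω i σ t ρ q)
    (hY : ∀ v, LiveP Ω i ρ v → (Ω (ρ v)).val = i →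
      ∀ b, ρ (v ++ [b]) ∈ Y (t.subtree (v ++ [b]))) :
    PRun γ Ω (i+1) (Function.update σ i Y) t ρ q := by
  obtain ⟨hroot, htr, hex, hbr⟩ := h
  refine ⟨hroot, fun v hv => htr v (hv.mono (Nat.le_succ i)), ?_, ?_⟩
  · intro v hv hlt b
    rcases Nat.lt_or_ge (Ω (ρ v)).val i with h' | h'
    · rw [Function.update_apply, if_neg (by omega)]
      exact hex v (hv.mono (Nat.le_succ i)) h' b
    · have he : (Ω (ρ v)).val = i := by omega
      rw [he, Function.update_self]
      exact hY v (hv.mono (Nat.le_succ i)) he b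
  · intro w hw
    exact hbr w (fun n => le_trans (Nat.le_succ i) (hw n))

open Classical in
noncomputable def glueRho (i : ℕ) (ρ : List Bool → Q) (g : List Bool → List Bool → Q) :
    List Bool → Q := fun v =>
  if h : ∃ u, ECross Ω i ρ u ∧ u <+: v then
    g h.choose (v.drop h.choose.length)
  else ρ v

theorem glueRho_neg {i : ℕ} {ρ : List Bool → Q} {g : List Bool → List Bool → Q} {v : List Bool}
    (h : ¬ ∃ u, ECross Ω i ρ u ∧ u <+: v) : glueRho Ω i ρ g v = ρ v := dif_neg h

theorem glueRho_pos {i : ℕ} {ρ : List Bool → Q} {g : List Bool → List Bool → Q} {v u : List Bool}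
    (hu : ECross Ω i ρ u) (hp : u <+: v) : glueRho Ω i ρ g v = g u (v.drop u.length) := by
  have h : ∃ u, ECross Ω i ρ u ∧ u <+: v := ⟨u, hu, hp⟩
  rw [glueRho, dif_pos h, ECross_unique h.choose_spec.1 hu h.choose_spec.2 hp]

theorem glue_one {i : ℕ} {σ : ℕ → BTree A → Set Q} :
    PR γ Ω (i+1) (Function.update σ i (PR γ Ω i σ)) ≤ PR γ Ω i σ := by
  classical
  rintro t q ⟨ρ, hroot, htr, hex, hbr⟩
  have hsel : ∀ u, ∃ gu : List Bool → Q,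
      ECross Ω i ρ u → PRun γ Ω i σ (t.subtree u) gu (ρ u) := by
    intro u
    by_cases h : ECross Ω i ρ u
    · obtain ⟨w, b, rfl, hlw, hpw⟩ := h
      have hm := hex w hlw (by omega) b
      rw [hpw, Function.update_self] at hm
      obtain ⟨gu, hgu⟩ := hm
      exact ⟨gu, fun _ => hgu⟩
    · exact ⟨fun _ => ρ u, fun hc => absurd hc h⟩
  choose g hg using hsel
  set rho' := glueRho Ω i ρ g with hrho'
  have hEroot : ∀ u, ECross Ω i ρ u → g u [] = ρ u := fun u hu => (hg u hu).1
  have hErho : ∀ u, ECross Ω i ρ u → rho' u = ρ u := by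
    intro u hu
    rw [hrho', glueRho_pos Ω hu List.prefix_rfl, List.drop_length, hEroot u hu]
  have hnot : ∀ v, ¬ (∃ u, ECross Ω i ρ u ∧ u <+: v) → rho' v = ρ v :=
    fun v h => glueRho_neg Ω h
  -- outer region: liveness transfer
  have houter : ∀ v, ¬ (∃ u, ECross Ω i ρ u ∧ u <+: v) → LiveP Ω i rho' v →
      LiveP Ω (i+1) ρ v ∧ (∀ x, x <+: v → rho' x = ρ x) := by
    intro v hnp hv
    have hpre : ∀ x, x <+: v → ¬ (∃ u, ECross Ω i ρ u ∧ u <+: x) := by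
      rintro x hx ⟨u, hu, hp⟩; exact hnp ⟨u, hu, hp.trans hx⟩
    have hxr : ∀ x, x <+: v → rho' x = ρ x := fun x hx => hnot x (hpre x hx)
    refine ⟨?_, hxr⟩
    have key : ∀ n, n ≤ v.length → LiveP Ω (i+1) ρ (v.take n) := by
      intro n
      induction n with
      | zero => intro _; exact LiveP_nil
      | succ n ih =>
        intro hn
        have hlv : LiveP Ω (i+1) ρ (v.take n) := ih (by omega)
        have hpri : i ≤ (Ω (ρ (v.take n))).val := by
          have h1 := hv n (by omega)
          rwa [hxr (v.take n) (List.take_prefix n v)] at h1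
        have hne : (Ω (ρ (v.take n))).val ≠ i := by
          intro he
          exact hpre (v.take (n+1)) (List.take_prefix _ v)
            ⟨v.take (n+1), ⟨v.take n, v[n], take_snoc hn, hlv, he⟩, List.prefix_rfl⟩
        rw [take_snoc hn]
        exact LiveP_snoc.2 ⟨hlv, by omega⟩
    have h2 := key v.length le_rfl
    rwa [List.take_length] at h2
  -- inner region: liveness transfer
  have hinner : ∀ u y, ECross Ω i ρ u → LiveP Ω i rho' (u ++ y) → LiveP Ω i (g u) y := by
    intro u y hu hv n hn
    have h1 := hv (u.length + n) (by rw [List.length_append]; omega)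
    rw [List.take_append, List.take_of_length_le (by omega),
      Nat.add_sub_cancel_left] at h1
    rwa [hrho', glueRho_pos Ω hu ⟨y.take n, rfl⟩, List.drop_left] at h1
  have hchildpos : ∀ u y b, ECross Ω i ρ u → rho' ((u ++ y) ++ [b]) = g u (y ++ [b]) := by
    intro u y b hu
    rw [hrho', List.append_assoc, glueRho_pos Ω hu ⟨y ++ [b], rfl⟩, List.drop_left]
  refine ⟨rho', ?_, ?_, ?_, ?_⟩
  · -- root
    have hnp : ¬ (∃ u, ECross Ω i ρ u ∧ u <+: ([] : List Bool)) := by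
      rintro ⟨u, ⟨w, b, he, -, -⟩, hp⟩
      rw [List.prefix_nil.1 hp] at he
      simp at he
    rw [hnot [] hnp, hroot]
  · -- transitions
    intro v hv
    by_cases hp : ∃ u, ECross Ω i ρ u ∧ u <+: v
    · obtain ⟨u, hu, y, rfl⟩ := hp
      have hry : rho' (u ++ y) = g u y := by
        rw [hrho', glueRho_pos Ω hu ⟨y, rfl⟩, List.drop_left]
      have htry := (hg u hu).2.1 y (hinner u y hu hv)
      rw [hry, hchildpos u y false hu, hchildpos u y true hu]
      exact htry
    · obtain ⟨hlv, hxr⟩ := houter v hp hv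
      have hchild : ∀ b, rho' (v ++ [b]) = ρ (v ++ [b]) := by
        intro b
        by_cases hc : ∃ u, ECross Ω i ρ u ∧ u <+: v ++ [b]
        · obtain ⟨u, hu, hup⟩ := hc
          rcases prefix_snoc hup with h | h
          · exact absurd ⟨u, hu, h⟩ hp
          · subst h; exact hErho _ hu
        · exact hnot _ hc
      rw [hxr v List.prefix_rfl, hchild false, hchild true]
      exact htr v hlv
  · -- exits
    intro v hv hlt b
    by_cases hp : ∃ u, ECross Ω i ρ u ∧ u <+: v
    · obtain ⟨u, hu, y, rfl⟩ := hp
      have hry : rho' (u ++ y) = g u y := by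
        rw [hrho', glueRho_pos Ω hu ⟨y, rfl⟩, List.drop_left]
      rw [hry] at hlt ⊢
      have hj := (hg u hu).2.2.1 y (hinner u y hu hv) hlt b
      rw [subtree_subtree] at hj
      rw [hchildpos u y b hu, List.append_assoc]
      exact hj
    · obtain ⟨hlv, hxr⟩ := houter v hp hv
      rw [hxr v List.prefix_rfl] at hlt ⊢
      have hc : ¬ (∃ u, ECross Ω i ρ u ∧ u <+: v ++ [b]) := by
        rintro ⟨u, hu, hup⟩
        rcases prefix_snoc hup with h | h
        · exact hp ⟨u, hu, h⟩
        · subst h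
          obtain ⟨w, b', he, hlw, hpw⟩ := hu
          obtain ⟨h1, -⟩ := List.append_inj he (by
            have := congrArg List.length he
            simpa using this)
          rw [← h1] at hpw
          omega
      rw [hnot _ hc]
      have hm := hex v hlv (by omega) b
      rwa [Function.update_apply, if_neg (by omega)] at hm
  · -- branches
    intro w hw
    by_cases hc : ∃ n, ∃ u, ECross Ω i ρ u ∧ u <+: pref w n
    · obtain ⟨n₀, u, hu, hup⟩ := hc
      have hulen : u = pref w u.length := by
        have hl : u.length ≤ n₀ := by
          have := hup.length_le
          rwa [pref_length] at this
        have h3 := pref_take w (k := n₀) hl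
        rw [← h3]
        exact List.prefix_iff_eq_take.1 hup
      have hsplit : ∀ j, pref w (u.length + j) = u ++ pref (fun m => w (u.length + m)) j := by
        intro j; rw [pref_split w u.length j, ← hulen]
      have hrw : ∀ j, rho' (pref w (u.length + j)) = g u (pref (fun m => w (u.length + m)) j) := by
        intro j
        rw [hsplit j, hrho', glueRho_pos Ω hu ⟨_, rfl⟩, List.drop_left]
      have hwlive : ∀ j, i ≤ (Ω (g u (pref (fun m => w (u.length + m)) j))).val := by
        intro j; have := hw (u.length + j); rwa [hrw j] at this
      have hEv := (hg u hu).2.2.2 _ hwlive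
      show Even (Filter.liminf (fun n => (Ω (rho' (pref w n))).val + 1) Filter.atTop)
      have heq : (fun j => (Ω (g u (pref (fun m => w (u.length + m)) j))).val + 1)
          = fun j => (fun n => (Ω (rho' (pref w n))).val + 1) (u.length + j) := by
        funext j
        show _ = (Ω (rho' (pref w (u.length + j)))).val + 1
        rw [hrw j]
      rw [heq, liminf_shift (fun n => (Ω (rho' (pref w n))).val + 1) u.length] at hEv
      exact hEv
    · have hc' : ∀ n, ¬ ∃ u, ECross Ω i ρ u ∧ u <+: pref w n := fun n hex => hc ⟨n, hex⟩
      have hxr : ∀ n, rho' (pref w n) = ρ (pref w n) := fun n => hnot _ (hc' n)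
      have hlive : ∀ n, LiveP Ω (i+1) ρ (pref w n) := by
        intro n
        induction n with
        | zero => exact LiveP_nil
        | succ n ih =>
          rw [pref_succ]
          refine LiveP_snoc.2 ⟨ih, ?_⟩
          have h1 : i ≤ (Ω (ρ (pref w n))).val := by
            have := hw n; rwa [hxr n] at this
          rcases Nat.lt_or_ge i ((Ω (ρ (pref w n))).val) with h2 | h2
          · omega
          · exfalso
            have he : (Ω (ρ (pref w n))).val = i := by omega
            exact hc' (n+1)
              ⟨pref w (n+1), ⟨pref w n, w n, pref_succ w n, ih, he⟩, List.prefix_rfl⟩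
      have hge : ∀ n, i + 1 ≤ (Ω (ρ (pref w n))).val := by
        intro n
        have h2 := hlive (n+1)
        rw [pref_succ] at h2
        exact (LiveP_snoc.1 h2).2
      have hEv := hbr w hge
      show Even (Filter.liminf (fun n => (Ω (rho' (pref w n))).val + 1) Filter.atTop)
      have heq : (fun n => (Ω (rho' (pref w n))).val + 1)
          = fun n => (Ω (ρ (pref w n))).val + 1 := funext fun n => by rw [hxr n]
      rw [heq]
      exact hEv

theorem mu_ge {i : ℕ} (hi : Even i) {σ : ℕ → BTree A → Set Q} :
    PR γ Ω i σ ≤ lfpOf (fun y => PR γ Ω (i+1) (Function.update σ i y)) := by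
  intro t q hq
  set L := lfpOf (fun y => PR γ Ω (i+1) (Function.update σ i y)) with hLdef
  have hpre : PR γ Ω (i+1) (Function.update σ i L) ≤ L := lfpOf_prefix (F_mono γ Ω i σ)
  obtain ⟨ρ, hρ⟩ := hq
  set R : List Bool → List Bool → Prop :=
    fun u v => ∃ w b, u = w ++ [b] ∧ v <+: w ∧ LiveP Ω i ρ w ∧ (Ω (ρ w)).val = i with hR
  have hwf : WellFounded R := by
    refine wf_of_no_descending (fun g hstep => ?_)
    have hpfx : ∀ n, g n <+: g (n+1) := by
      intro n; obtain ⟨w, b, he, hpw, _, _⟩ := hstep n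
      exact hpw.trans (by rw [he]; exact ⟨[b], rfl⟩)
    have hlen : ∀ n, (g n).length < (g (n+1)).length := by
      intro n; obtain ⟨w, b, he, hpw, _, _⟩ := hstep n
      have h1 := hpw.length_le
      rw [he, List.length_append, List.length_singleton]
      omega
    obtain ⟨winf, hwinf⟩ := exists_branch_of_chain g hpfx hlen
    have hglen : ∀ n, n ≤ (g n).length := by
      intro n; induction n with
      | zero => exact Nat.zero_le _
      | succ n ih => have := hlen n; omega
    have hglive : ∀ n, LiveP Ω i ρ (g (n+1)) := by
      intro n; obtain ⟨w, b, he, hpw, hlw, hprw⟩ := hstep n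
      rw [he]; exact LiveP_snoc.2 ⟨hlw, le_of_eq hprw.symm⟩
    have hbound : ∀ n, i ≤ (Ω (ρ (pref winf n))).val := by
      intro n
      have h1 : n < (g (n+1)).length := lt_of_lt_of_le (Nat.lt_succ_self n) (hglen (n+1))
      have h3 := pref_take winf (k := (g (n+1)).length) h1.le
      rw [hwinf (n+1)] at h3
      rw [← h3]
      exact hglive n n h1
    have hfreq : ∀ N, ∃ n, N ≤ n ∧ (Ω (ρ (pref winf n))).val + 1 = i + 1 := by
      intro N
      obtain ⟨w, b, he, hpw, hlw, hprw⟩ := hstep N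
      refine ⟨w.length, le_trans (hglen N) hpw.length_le, ?_⟩
      have hwp : w <+: g (N+1) := by rw [he]; exact ⟨[b], rfl⟩
      have h3 := pref_take winf (k := (g (N+1)).length) hwp.length_le
      rw [hwinf (N+1)] at h3
      have h2 : pref winf w.length = w := by
        rw [← h3]
        exact (List.prefix_iff_eq_take.1 hwp).symm
      rw [h2, hprw]
    have hlim := liminf_eq_of (fun n => Nat.succ_le_succ (hbound n)) hfreq
    have heven := hρ.2.2.2 winf hbound
    rw [hlim] at heven
    exact (Nat.even_add_one.1 heven) hi
  have main : ∀ v, LiveP Ω i ρ v → ρ v ∈ L (t.subtree v) := by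
    intro v
    refine WellFounded.induction (C := fun v => LiveP Ω i ρ v → ρ v ∈ L (t.subtree v)) hwf v ?_
    intro x ih hx
    refine hpre (t.subtree x) ⟨fun z => ρ (x ++ z), truncate γ Ω (restrict γ Ω hρ hx) ?_⟩
    intro y hy hpri b
    have hxy : LiveP Ω i ρ (x ++ y) := hx.append hy
    have hprixy : (Ω (ρ (x ++ y))).val = i := hpri
    have hRyx : R (x ++ (y ++ [b])) x :=
      ⟨x ++ y, b, by rw [List.append_assoc], ⟨y, rfl⟩, hxy, hprixy⟩
    have hlivexy : LiveP Ω i ρ (x ++ (y ++ [b])) := by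
      rw [← List.append_assoc]
      exact LiveP_snoc.2 ⟨hxy, hprixy ▸ le_rfl⟩
    have hmem := ih _ hRyx hlivexy
    rw [subtree_subtree]
    exact hmem
  have h0 := main [] LiveP_nil
  rw [hρ.1, subtree_nil] at h0
  exact h0


theorem LiveP_pref {Ω : Q → Fin d} {m : ℕ} {ρ : List Bool → Q} {w : ℕ → Bool}
    (hw : ∀ n, m ≤ (Ω (ρ (pref w n))).val) : ∀ n, LiveP Ω m ρ (pref w n) := by
  intro n
  induction n with
  | zero => exact LiveP_nil
  | succ n ih => rw [pref_succ]; exact LiveP_snoc.2 ⟨ih, hw n⟩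

theorem drop_append_prefix {α : Type*} {p v s : List α} (h : p <+: v) :
    (v ++ s).drop p.length = v.drop p.length ++ s := by
  obtain ⟨y, rfl⟩ := h
  rw [List.append_assoc, List.drop_left, List.drop_left]

/-- A layer of the recursive (ν) gluing: a position `p` together with a partial
run on the subtree at `p`. -/
def NuLayer (i : ℕ) (σ : ℕ → BTree A → Set Q) (Y : BTree A → Set Q) (t : BTree A) : Type _ :=
  {pr : List Bool × (List Bool → Q) //
    PRun γ Ω (i+1) (Function.update σ i Y) (t.subtree pr.1) pr.2 (pr.2 [])}

/-- Condition for exiting the current layer at node `v`. -/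
def nuCond {i : ℕ} {σ : ℕ → BTree A → Set Q} {Y : BTree A → Set Q} {t : BTree A}
    (ℓ : NuLayer γ Ω i σ Y t) (v : List Bool) : Prop :=
  ℓ.1.1 <+: v ∧ LiveP Ω (i+1) ℓ.1.2 (v.drop ℓ.1.1.length) ∧
    (Ω (ℓ.1.2 (v.drop ℓ.1.1.length))).val = i

theorem nuCond_mem {i : ℕ} {σ : ℕ → BTree A → Set Q} {Y : BTree A → Set Q} {t : BTree A}
    {ℓ : NuLayer γ Ω i σ Y t} {v : List Bool} (h : nuCond γ Ω ℓ v) (b : Bool) :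
    ℓ.1.2 (v.drop ℓ.1.1.length ++ [b]) ∈ Y (t.subtree (v ++ [b])) := by
  obtain ⟨hpre, hlive, hpri⟩ := h
  have hex := ℓ.2.2.2.1 _ hlive (by rw [hpri]; omega) b
  rw [hpri, Function.update_self, subtree_subtree] at hex
  obtain ⟨y, hy⟩ := hpre
  have hyd : ∀ k, k = ℓ.1.1.length → v.drop k = y := by
    intro k hk
    rw [← hy, hk]
    exact List.drop_left
  have hxv : ℓ.1.1 ++ v.drop ℓ.1.1.length = v := by rw [hyd _ rfl]; exact hy
  rw [← List.append_assoc, hxv] at hex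
  exact hex

open Classical in
/-- One step of the recursive gluing. -/
noncomputable def nuStep {i : ℕ} {σ : ℕ → BTree A → Set Q} {Y : BTree A → Set Q} {t : BTree A}
    (hY : ∀ s qq, qq ∈ Y s → ∃ ρc, PRun γ Ω (i+1) (Function.update σ i Y) s ρc qq)
    (v : List Bool) (b : Bool) (ℓ : NuLayer γ Ω i σ Y t) : NuLayer γ Ω i σ Y t :=
  if h : nuCond γ Ω ℓ v then
    ⟨(v ++ [b], Classical.choose (hY _ _ (nuCond_mem γ Ω h b))), by
      have hs := Classical.choose_spec (hY _ _ (nuCond_mem γ Ω h b))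
      show PRun γ Ω (i+1) (Function.update σ i Y) (t.subtree (v ++ [b]))
        (Classical.choose (hY _ _ (nuCond_mem γ Ω h b)))
        (Classical.choose (hY _ _ (nuCond_mem γ Ω h b)) [])
      rw [hs.1]
      exact hs⟩
  else ℓ

theorem nuStep_neg {i : ℕ} {σ : ℕ → BTree A → Set Q} {Y : BTree A → Set Q} {t : BTree A}
    {hY : ∀ s qq, qq ∈ Y s → ∃ ρc, PRun γ Ω (i+1) (Function.update σ i Y) s ρc qq}
    {v : List Bool} {b : Bool} {ℓ : NuLayer γ Ω i σ Y t} (h : ¬ nuCond γ Ω ℓ v) :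
    nuStep γ Ω hY v b ℓ = ℓ := dif_neg h

theorem nuStep_p_pos {i : ℕ} {σ : ℕ → BTree A → Set Q} {Y : BTree A → Set Q} {t : BTree A}
    {hY : ∀ s qq, qq ∈ Y s → ∃ ρc, PRun γ Ω (i+1) (Function.update σ i Y) s ρc qq}
    {v : List Bool} {b : Bool} {ℓ : NuLayer γ Ω i σ Y t} (h : nuCond γ Ω ℓ v) :
    (nuStep γ Ω hY v b ℓ).1.1 = v ++ [b] := by
  rw [show nuStep γ Ω hY v b ℓ = _ from dif_pos h]

theorem nuStep_root_pos {i : ℕ} {σ : ℕ → BTree A → Set Q} {Y : BTree A → Set Q} {t : BTree A}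
    {hY : ∀ s qq, qq ∈ Y s → ∃ ρc, PRun γ Ω (i+1) (Function.update σ i Y) s ρc qq}
    {v : List Bool} {b : Bool} {ℓ : NuLayer γ Ω i σ Y t} (h : nuCond γ Ω ℓ v) :
    (nuStep γ Ω hY v b ℓ).1.2 [] = ℓ.1.2 (v.drop ℓ.1.1.length ++ [b]) := by
  rw [show nuStep γ Ω hY v b ℓ = _ from dif_pos h]
  exact (Classical.choose_spec (hY _ _ (nuCond_mem γ Ω h b))).1

noncomputable def nuLrev {i : ℕ} {σ : ℕ → BTree A → Set Q} {Y : BTree A → Set Q} {t : BTree A}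
    (hY : ∀ s qq, qq ∈ Y s → ∃ ρc, PRun γ Ω (i+1) (Function.update σ i Y) s ρc qq)
    (ℓ0 : NuLayer γ Ω i σ Y t) : List Bool → NuLayer γ Ω i σ Y t
  | [] => ℓ0
  | b :: r => nuStep γ Ω hY r.reverse b (nuLrev hY ℓ0 r)

noncomputable def nuLayer {i : ℕ} {σ : ℕ → BTree A → Set Q} {Y : BTree A → Set Q} {t : BTree A}
    (hY : ∀ s qq, qq ∈ Y s → ∃ ρc, PRun γ Ω (i+1) (Function.update σ i Y) s ρc qq)
    (ℓ0 : NuLayer γ Ω i σ Y t) (v : List Bool) : NuLayer γ Ω i σ Y t :=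
  nuLrev γ Ω hY ℓ0 v.reverse

theorem nuLayer_nil {i : ℕ} {σ : ℕ → BTree A → Set Q} {Y : BTree A → Set Q} {t : BTree A}
    {hY : ∀ s qq, qq ∈ Y s → ∃ ρc, PRun γ Ω (i+1) (Function.update σ i Y) s ρc qq}
    {ℓ0 : NuLayer γ Ω i σ Y t} : nuLayer γ Ω hY ℓ0 [] = ℓ0 := rfl

theorem nuLayer_snoc {i : ℕ} {σ : ℕ → BTree A → Set Q} {Y : BTree A → Set Q} {t : BTree A}
    {hY : ∀ s qq, qq ∈ Y s → ∃ ρc, PRun γ Ω (i+1) (Function.update σ i Y) s ρc qq}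
    {ℓ0 : NuLayer γ Ω i σ Y t} (v : List Bool) (b : Bool) :
    nuLayer γ Ω hY ℓ0 (v ++ [b]) = nuStep γ Ω hY v b (nuLayer γ Ω hY ℓ0 v) := by
  unfold nuLayer
  rw [List.reverse_append]
  show nuLrev γ Ω hY ℓ0 (b :: v.reverse) = _
  rw [nuLrev, List.reverse_reverse]

theorem nu_le {i : ℕ} (hi : Odd i) {σ : ℕ → BTree A → Set Q} :
    gfpOf (fun y => PR γ Ω (i+1) (Function.update σ i y)) ≤ PR γ Ω i σ := by
  classical
  set Y := gfpOf (fun y => PR γ Ω (i+1) (Function.update σ i y)) with hYdef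
  have hpost : Y ≤ PR γ Ω (i+1) (Function.update σ i Y) := gfpOf_postfix (F_mono γ Ω i σ)
  have hY : ∀ s qq, qq ∈ Y s → ∃ ρc, PRun γ Ω (i+1) (Function.update σ i Y) s ρc qq :=
    fun s qq h => hpost s h
  intro t q hq
  have hl0ex : ∃ ℓ0 : NuLayer γ Ω i σ Y t, ℓ0.1.1 = [] ∧ ℓ0.1.2 [] = q := by
    obtain ⟨ρ0, hρ0⟩ := hY t q hq
    refine ⟨⟨([], ρ0), ?_⟩, rfl, hρ0.1⟩
    show PRun γ Ω (i+1) (Function.update σ i Y) (t.subtree []) ρ0 (ρ0 [])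
    rw [subtree_nil, hρ0.1]
    exact hρ0
  obtain ⟨ℓ0, hp0, hq0⟩ := hl0ex
  set L : List Bool → NuLayer γ Ω i σ Y t := nuLayer γ Ω hY ℓ0 with hLdef
  set R : List Bool → Q := fun v => (L v).1.2 (v.drop (L v).1.1.length) with hRdef
  have hsnoc : ∀ v b, L (v ++ [b]) = nuStep γ Ω hY v b (L v) := by
    intro v b
    rw [hLdef]
    exact nuLayer_snoc γ Ω v b
  have hMp : ∀ v, (L v).1.1 <+: v := by
    intro v
    induction v using List.reverseRecOn with
    | nil =>
      rw [hLdef, nuLayer_nil, hp0]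
    | append_singleton v b ih =>
      rw [hsnoc v b]
      by_cases h : nuCond γ Ω (L v) v
      · rw [nuStep_p_pos γ Ω h]
      · rw [nuStep_neg γ Ω h]
        exact ih.trans ⟨[b], rfl⟩
  have hxv : ∀ v, (L v).1.1 ++ v.drop (L v).1.1.length = v := by
    intro v
    obtain ⟨y, hy⟩ := hMp v
    have hyd : ∀ k, k = (L v).1.1.length → v.drop k = y := by
      intro k hk
      rw [← hy, hk]
      exact List.drop_left
    rw [hyd _ rfl]
    exact hy
  have hM : ∀ v, LiveP Ω i R v → LiveP Ω (i+1) (L v).1.2 (v.drop (L v).1.1.length) := by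
    intro v
    induction v using List.reverseRecOn with
    | nil =>
      intro _
      rw [List.drop_nil]
      exact LiveP_nil
    | append_singleton v b ih =>
      intro hlv
      have hlv' : LiveP Ω i R v := hlv.prefix ⟨[b], rfl⟩
      have hx := ih hlv'
      have hpriv : i ≤ (Ω (R v)).val := (LiveP_snoc.1 hlv).2
      rw [hsnoc v b]
      by_cases h : nuCond γ Ω (L v) v
      · rw [nuStep_p_pos γ Ω h, List.drop_length]
        exact LiveP_nil
      · rw [nuStep_neg γ Ω h, drop_append_prefix (hMp v)]
        refine LiveP_snoc.2 ⟨hx, ?_⟩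
        have hne : ¬ (Ω ((L v).1.2 (v.drop (L v).1.1.length))).val = i :=
          fun he => h ⟨hMp v, hx, he⟩
        have h1 : i ≤ (Ω ((L v).1.2 (v.drop (L v).1.1.length))).val := hpriv
        omega
  have hMval : ∀ v b, R (v ++ [b]) = (L v).1.2 (v.drop (L v).1.1.length ++ [b]) := by
    intro v b
    show (L (v ++ [b])).1.2 ((v ++ [b]).drop (L (v ++ [b])).1.1.length) = _
    rw [hsnoc v b]
    by_cases h : nuCond γ Ω (L v) v
    · rw [nuStep_p_pos γ Ω h, List.drop_length]
      exact nuStep_root_pos γ Ω h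
    · rw [nuStep_neg γ Ω h, drop_append_prefix (hMp v)]
  refine ⟨R, ?_, ?_, ?_, ?_⟩
  · show (L []).1.2 (List.drop (L []).1.1.length []) = q
    rw [List.drop_nil, hLdef, nuLayer_nil]
    exact hq0
  · intro v hv
    have hx := hM v hv
    have htr := (L v).2.2.1 _ hx
    have htv : (t.subtree (L v).1.1) (v.drop (L v).1.1.length) = t v := by
      show t ((L v).1.1 ++ v.drop (L v).1.1.length) = t v
      rw [hxv v]
    rw [htv] at htr
    show (R v, t v, R (v ++ [false]), R (v ++ [true])) ∈ γ
    rw [hMval v false, hMval v true]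
    exact htr
  · intro v hv hlt b
    have hx := hM v hv
    have hlt0 : (Ω ((L v).1.2 (v.drop (L v).1.1.length))).val < i := hlt
    have hex := (L v).2.2.2.1 _ hx (by omega) b
    have hji : ¬ ((Ω ((L v).1.2 (v.drop (L v).1.1.length))).val = i) := by omega
    rw [Function.update_apply, if_neg hji, subtree_subtree,
      show (L v).1.1 ++ (v.drop (L v).1.1.length ++ [b]) = v ++ [b] by
        rw [← List.append_assoc, hxv v]] at hex
    show R (v ++ [b]) ∈ σ (Ω (R v)).val (t.subtree (v ++ [b]))
    rw [hMval v b]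
    exact hex
  · intro w hw
    have hlvp : ∀ n, LiveP Ω i R (pref w n) := LiveP_pref hw
    by_cases hinf : ∀ N, ∃ n, N ≤ n ∧ (Ω (R (pref w n))).val = i
    · have h2 : ∀ N, ∃ n, N ≤ n ∧ (Ω (R (pref w n))).val + 1 = i + 1 := by
        intro N
        obtain ⟨n, hn, he⟩ := hinf N
        exact ⟨n, hn, by rw [he]⟩
      rw [liminf_eq_of (fun n => Nat.succ_le_succ (hw n)) h2]
      exact hi.add_one
    · push_neg at hinf
      obtain ⟨N₀, hN₀⟩ := hinf
      have hPex : ∃ N, ∀ n, N ≤ n → (Ω (R (pref w n))).val ≠ i := ⟨N₀, hN₀⟩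
      set N := Nat.find hPex with hNdef
      have hPN := Nat.find_spec hPex
      have hcross : N = 0 ∨ (Ω (R (pref w (N - 1)))).val = i := by
        rcases Nat.eq_zero_or_pos N with h | h
        · exact Or.inl h
        · right
          have hmin := Nat.find_min hPex (m := N - 1) (by omega)
          push_neg at hmin
          obtain ⟨n, hn1, hn2⟩ := hmin
          have hne : n = N - 1 := by
            by_contra hne
            exact hPN n (by omega) hn2
          rwa [← hne]
      have hentry : (L (pref w N)).1.1 = pref w N := by
        rcases hcross with h | h
        · rw [h]
          show (L []).1.1 = ([] : List Bool)
          rw [hLdef, nuLayer_nil, hp0]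
        · have hNpos : 0 < N := by
            rcases Nat.eq_zero_or_pos N with h0 | h0
            · exfalso
              refine hPN 0 (by omega) ?_
              have : N - 1 = 0 := by omega
              rw [this] at h
              exact h
            · exact h0
          obtain ⟨N', hN'⟩ : ∃ N', N = N' + 1 := ⟨N - 1, by omega⟩
          have hcondN : nuCond γ Ω (L (pref w N')) (pref w N') := by
            refine ⟨hMp _, hM _ (hlvp N'), ?_⟩
            have hNN : N - 1 = N' := by omega
            rw [hNN] at h
            exact h
          rw [hN', pref_succ, hsnoc, nuStep_p_pos γ Ω hcondN]
      have hstab : ∀ j, L (pref w (N + j)) = L (pref w N) := by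
        intro j
        induction j with
        | zero => rfl
        | succ j ih =>
          rw [show N + (j+1) = (N + j) + 1 by omega, pref_succ, hsnoc]
          have hnc : ¬ nuCond γ Ω (L (pref w (N + j))) (pref w (N + j)) := by
            intro hcond
            exact hPN (N + j) (by omega) hcond.2.2
          rw [nuStep_neg γ Ω hnc]
          exact ih
      have hxj : ∀ j, (pref w (N + j)).drop (L (pref w (N + j))).1.1.length
          = pref (fun m => w (N + m)) j := by
        intro j
        rw [hstab j, hentry, pref_split w N j, List.drop_left]
      have hRj : ∀ j, R (pref w (N + j)) = (L (pref w N)).1.2 (pref (fun m => w (N + m)) j) := by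
        intro j
        show (L (pref w (N + j))).1.2
          ((pref w (N + j)).drop (L (pref w (N + j))).1.1.length) = _
        rw [hxj j, hstab j]
      have hhyp : ∀ j, i + 1 ≤ (Ω ((L (pref w N)).1.2 (pref (fun m => w (N + m)) j))).val := by
        intro j
        have h1 : i ≤ (Ω (R (pref w (N + j)))).val := hw (N + j)
        have h2 : (Ω (R (pref w (N + j)))).val ≠ i := hPN (N + j) (by omega)
        rw [hRj j] at h1 h2
        omega
      have hbrL := (L (pref w N)).2.2.2.2 (fun m => w (N + m)) hhyp
      show Even (Filter.liminf (fun n => (Ω (R (pref w n))).val + 1) Filter.atTop)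
      have heq : (fun j => (Ω ((L (pref w N)).1.2 (pref (fun m => w (N + m)) j))).val + 1)
          = fun j => (fun n => (Ω (R (pref w n))).val + 1) (N + j) := by
        funext j
        show _ = (Ω (R (pref w (N + j)))).val + 1
        rw [hRj j]
      rw [heq, liminf_shift (fun n => (Ω (R (pref w n))).val + 1) N] at hbrL
      exact hbrL

theorem trunc_self (i : ℕ) (σ : ℕ → BTree A → Set Q) :
    PR γ Ω i σ ≤ PR γ Ω (i+1) (Function.update σ i (PR γ Ω i σ)) := by
  rintro t q ⟨ρ, hρ⟩
  refine ⟨ρ, truncate γ Ω hρ ?_⟩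
  intro v hv hpri b
  refine ⟨fun x => ρ ((v ++ [b]) ++ x), restrict γ Ω hρ ?_⟩
  intro n hn
  simp only [List.length_append, List.length_singleton] at hn
  rcases Nat.lt_or_ge n v.length with h' | h'
  · rw [List.take_append_of_le_length (le_of_lt h')]
    exact hv n h'
  · have : n = v.length := by omega
    subst this
    rw [List.take_append_of_le_length le_rfl, List.take_length]
    exact hpri.ge

theorem mu_case {i : ℕ} (hi : Even i) (σ : ℕ → BTree A → Set Q) :
    lfpOf (fun y => PR γ Ω (i+1) (Function.update σ i y)) = PR γ Ω i σ :=
  le_antisymm (lfpOf_le (glue_one γ Ω)) (mu_ge γ Ω hi)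

theorem nu_case {i : ℕ} (hi : Odd i) (σ : ℕ → BTree A → Set Q) :
    gfpOf (fun y => PR γ Ω (i+1) (Function.update σ i y)) = PR γ Ω i σ :=
  le_antisymm (nu_le γ Ω hi) (le_gfpOf (trunc_self γ Ω i σ))

theorem base_case (σ : ℕ → BTree A → Set Q) :
    deltaAut γ Ω (fun i => σ i.val) = PR γ Ω d σ := by
  ext t q
  constructor
  · rintro ⟨qL, qR, htr, hL, hR⟩
    have hq : (Ω q).val < d := (Ω q).isLt
    refine ⟨fun v => match v with | [] => q | (b :: _) => cond b qR qL, rfl, ?_, ?_, ?_⟩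
    · intro v hv
      have hv0 : v = [] := by
        cases v with
        | nil => rfl
        | cons b l =>
          have := hv 0 (by simp)
          simp only [List.take_zero] at this
          omega
      subst hv0
      exact htr
    · intro v hv _ b
      have hv0 : v = [] := by
        cases v with
        | nil => rfl
        | cons b l =>
          have := hv 0 (by simp)
          simp only [List.take_zero] at this
          omega
      subst hv0
      cases b
      · exact hL
      · exact hR
    · intro w hw
      have := hw 0
      simp only [pref_zero] at this
      omega
  · rintro ⟨ρ, hroot, htr, hex, _⟩
    have hlt : (Ω (ρ [])).val < d := (Ω (ρ [])).isLt
    refine ⟨ρ [false], ρ [true], ?_, ?_, ?_⟩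
    · have h0 := htr [] LiveP_nil
      rw [hroot] at h0
      exact h0
    · have h0 := hex [] LiveP_nil hlt false
      rw [hroot] at h0
      exact h0
    · have h0 := hex [] LiveP_nil hlt true
      rw [hroot] at h0
      exact h0

theorem main (k : ℕ) (hk : k ≤ d) (σ : ℕ → BTree A → Set Q) :
    NestedAux (deltaAut γ Ω) k σ = PR γ Ω (d - k) σ := by
  induction k generalizing σ with
  | zero => simpa [NestedAux] using base_case γ Ω σ
  | succ k ih =>
    have hk' : k ≤ d := le_of_lt hk
    have h1 : 1 ≤ d - k := by omega
    set i := d - k - 1 with hi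
    have hdk : d - k = i + 1 := by omega
    have hdk1 : d - (k + 1) = i := by omega
    have hupd : ∀ y : BTree A → Set Q,
        (fun j => if j = d - k - 1 then y else σ j) = Function.update σ i y := by
      intro y; funext j; rw [Function.update_apply, ← hi]
    have hfun : (fun y => NestedAux (deltaAut γ Ω) k (fun j => if j = d - k - 1 then y else σ j))
        = fun y => PR γ Ω (i+1) (Function.update σ i y) := by
      funext y
      rw [ih hk', hupd y, hdk]
    rw [show NestedAux (deltaAut γ Ω) (k+1) σ
        = if Odd (d - k) then
            lfpOf (fun y => NestedAux (deltaAut γ Ω) k (fun j => if j = d - k - 1 then y else σ j))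
          else
            gfpOf (fun y => NestedAux (deltaAut γ Ω) k (fun j => if j = d - k - 1 then y else σ j))
        from rfl, hfun, hdk1]
    rw [hdk]
    by_cases hpar : Odd (i + 1)
    · rw [if_pos hpar]
      exact mu_case γ Ω (Nat.not_odd_iff_even.mp (Nat.odd_add_one.mp hpar)) σ
    · rw [if_neg hpar]
      have he : Even (i+1) := Nat.not_odd_iff_even.mp hpar
      exact nu_case γ Ω (Nat.not_even_iff_odd.mp (Nat.even_add_one.mp he)) σ

theorem final : tauAut γ Ω = PR γ Ω 0 (fun _ => ⊥) := by
  ext t q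
  constructor
  · rintro ⟨ρ, hrun, hacc, hroot⟩
    exact ⟨ρ, hroot, fun v _ => hrun v, fun v _ h => absurd h (Nat.not_lt_zero _),
      fun w _ => hacc w⟩
  · rintro ⟨ρ, hroot, htrans, _, hacc⟩
    exact ⟨ρ, fun v => htrans v (fun n _ => Nat.zero_le _),
      fun w => hacc w (fun n => Nat.zero_le _), hroot⟩

end PF

/-- `τ_A = μx₁.νx₂.μx₃.νx₄.⋯.μx_{d−1}.νx_d.δ(x₁,…,x_d)`. -/
theorem stmt1 {A Q : Type*} [Fintype A] [Fintype Q] {d : ℕ}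
    (hd : 1 ≤ d) (hde : Even d)
    (γ : Set (Q × A × Q × Q)) (Ω : Q → Fin d) :
    tauAut γ Ω = Nested (deltaAut γ Ω) := by
  have h := PF.main γ Ω d le_rfl (fun _ => ⊥)
  rw [Nat.sub_self] at h
  rw [Nested, h, PF.final]
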